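/- arXiv:0904.0022 — 4 statements merged into one kernel-verified Lean document; each statement's English description precedes it below -/
import Mathlib

section
/- Let a ∈ ℂ. The function θ ↦ |((1 + e^{iθ})/(1 − e^{iθ}))^a|², defined for θ ∈ (−π, π) \ {0} using the principal complex power, is Lebesgue integrable over (−π, π) if and only if |Re(a)| < 1/2. (This is the criterion for the eigenfunction f_a(z) = ((1+z)/(1−z))^a to belong to the Hardy space H².) -/
open MeasureTheory
open Set Real

lemma cot_id (θ : ℝ) (hs : Real.sin (θ/2) ≠ 0) :
    (1 + Complex.exp (θ * Complex.I)) / (1 - Complex.exp (θ * Complex.I)) =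
      Complex.I * ((Real.cos (θ/2) / Real.sin (θ/2) : ℝ) : ℂ) := by
  set c : ℂ := (Real.cos (θ/2) : ℂ)
  set s : ℂ := (Real.sin (θ/2) : ℂ)
  have hz : Complex.exp (θ * Complex.I) = (c + s * Complex.I) ^ 2 := by
    have e1 : ((θ:ℂ)) * Complex.I = (2:ℕ) * (((θ/2 : ℝ):ℂ) * Complex.I) := by
      push_cast; ring
    rw [e1, Complex.exp_nat_mul, Complex.exp_mul_I, ← Complex.ofReal_cos,
      ← Complex.ofReal_sin]
  have pyth : s ^ 2 + c ^ 2 = 1 := by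
    rw [← Complex.ofReal_pow, ← Complex.ofReal_pow, ← Complex.ofReal_add]
    norm_cast
    exact Real.sin_sq_add_cos_sq _
  have hs' : s ≠ 0 := Complex.ofReal_ne_zero.mpr hs
  have hden : 1 - Complex.exp (θ * Complex.I) ≠ 0 := by
    rw [hz]
    intro h
    have h2 : s * (s - c * Complex.I) = 0 := by
      linear_combination h / 2 + pyth / 2 + (s^2/2) * Complex.I_sq
    rcases mul_eq_zero.mp h2 with h3 | h3
    · exact hs' h3
    · have h4 := (Complex.ext_iff.mp h3).1
      simp only [Complex.sub_re, Complex.mul_re, Complex.I_re, Complex.I_im,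
        Complex.ofReal_re, Complex.ofReal_im, Complex.zero_re, s, c] at h4
      exact hs (by linarith)
  have key : (1 + (c + s*Complex.I)^2) * s = Complex.I * c * (1 - (c + s*Complex.I)^2) := by
    linear_combination (Complex.I*c - s) * pyth + (s^3 + 2*c^2*s + c*s^2*Complex.I) * Complex.I_sq
  rw [div_eq_iff hden, hz, Complex.ofReal_div]
  have e2 : Complex.I * (c/s) * (1 - (c + s*Complex.I)^2)
      = (Complex.I * c * (1 - (c + s*Complex.I)^2))/s := by ring
  rw [e2, eq_div_iff hs']
  exact key

lemma norm_sq_cpow_pos (a : ℂ) {r : ℝ} (hr : 0 < r) :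
    ‖(Complex.I * (r : ℂ)) ^ a‖ ^ 2 =
      r ^ (2 * a.re) / Real.exp (Real.pi * a.im) := by
  have hne : Complex.I * (r : ℂ) ≠ 0 :=
    mul_ne_zero Complex.I_ne_zero (Complex.ofReal_ne_zero.mpr hr.ne')
  have harg : (Complex.I * (r : ℂ)).arg = Real.pi / 2 := by
    rw [Complex.arg_eq_pi_div_two_iff]
    constructor <;> simp [Complex.mul_re, Complex.mul_im, hr]
  have habs : ‖Complex.I * (r : ℂ)‖ = r := by
    rw [norm_mul, Complex.norm_I, Complex.norm_real, one_mul, Real.norm_eq_abs, abs_of_pos hr]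
  rw [Complex.norm_cpow_of_ne_zero hne, harg, habs]
  rw [div_pow, ← Real.exp_nat_mul]
  have h1 : (r ^ a.re) ^ (2:ℕ) = r ^ (2 * a.re) := by
    rw [← Real.rpow_natCast (r ^ a.re) 2, ← Real.rpow_mul hr.le]
    ring_nf
  rw [h1]
  norm_num
  ring_nf

lemma norm_sq_cpow_neg (a : ℂ) {r : ℝ} (hr : r < 0) :
    ‖(Complex.I * (r : ℂ)) ^ a‖ ^ 2 =
      (-r) ^ (2 * a.re) * Real.exp (Real.pi * a.im) := by
  have hne : Complex.I * (r : ℂ) ≠ 0 :=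
    mul_ne_zero Complex.I_ne_zero (Complex.ofReal_ne_zero.mpr hr.ne)
  have harg : (Complex.I * (r : ℂ)).arg = -(Real.pi / 2) := by
    rw [Complex.arg_eq_neg_pi_div_two_iff]
    constructor <;> simp [Complex.mul_re, Complex.mul_im, hr]
  have habs : ‖Complex.I * (r : ℂ)‖ = -r := by
    rw [norm_mul, Complex.norm_I, Complex.norm_real, one_mul, Real.norm_eq_abs, abs_of_neg hr]
  rw [Complex.norm_cpow_of_ne_zero hne, harg, habs]
  rw [div_pow, ← Real.exp_nat_mul]
  have h1 : ((-r) ^ a.re) ^ (2:ℕ) = (-r) ^ (2 * a.re) := by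
    rw [← Real.rpow_natCast ((-r) ^ a.re) 2, ← Real.rpow_mul (by linarith)]
    ring_nf
  rw [h1, div_eq_mul_inv, ← Real.exp_neg]
  ring_nf

section helpers

lemma refl_iff (c : ℝ) (f : ℝ → ℝ) (s : Set ℝ) :
    IntegrableOn (fun x => f (c - x)) ((fun x => c - x) ⁻¹' s) volume ↔
      IntegrableOn f s volume :=
  (Measure.measurePreserving_sub_left volume c).integrableOn_comp_preimage
    (MeasurableEquiv.subLeft c).measurableEmbedding

lemma constMul_iff {k : ℝ} (hk : k ≠ 0) (f : ℝ → ℝ) (s : Set ℝ) :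
    IntegrableOn (fun x => k * f x) s volume ↔ IntegrableOn f s volume := by
  exact (integrable_smul_iff hk f (μ := volume.restrict s))

lemma congr_set_iff {f : ℝ → ℝ} {s t : Set ℝ} (h : s =ᵐ[volume] t) :
    IntegrableOn f s volume ↔ IntegrableOn f t volume := by
  unfold IntegrableOn
  rw [Measure.restrict_congr_set h]

lemma iff_of_sandwich {f g : ℝ → ℝ} {s : Set ℝ} (hs : MeasurableSet s)
    (hf : AEStronglyMeasurable f (volume.restrict s))
    (hg : AEStronglyMeasurable g (volume.restrict s))
    {m M : ℝ} (hm : 0 < m) (hg0 : ∀ x ∈ s, 0 ≤ g x)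
    (h1 : ∀ x ∈ s, m * g x ≤ f x) (h2 : ∀ x ∈ s, f x ≤ M * g x) :
    IntegrableOn f s volume ↔ IntegrableOn g s volume := by
  constructor
  · intro hfi
    refine Integrable.mono' (hfi.const_mul m⁻¹) hg ?_
    rw [ae_restrict_iff' hs]
    filter_upwards with x hx
    rw [Real.norm_eq_abs, abs_of_nonneg (hg0 x hx), le_inv_mul_iff₀ hm]
    exact h1 x hx
  · intro hgi
    refine Integrable.mono' (hgi.const_mul M) hf ?_
    rw [ae_restrict_iff' hs]
    filter_upwards with x hx
    rw [Real.norm_eq_abs, abs_of_nonneg ((mul_nonneg hm.le (hg0 x hx)).trans (h1 x hx))]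
    exact h2 x hx

lemma rpow_sandwich {x u α β p : ℝ} (hu : 0 < u) (hα : 0 < α) (hβ : 0 < β)
    (h1 : α * u ≤ x) (h2 : x ≤ β * u) :
    min (α ^ p) (β ^ p) * u ^ p ≤ x ^ p ∧ x ^ p ≤ max (α ^ p) (β ^ p) * u ^ p := by
  have hx : 0 < x := lt_of_lt_of_le (mul_pos hα hu) h1
  have hup : (0:ℝ) < u ^ p := Real.rpow_pos_of_pos hu p
  rcases le_or_gt 0 p with hp | hp
  · constructor
    · calc min (α ^ p) (β ^ p) * u ^ p ≤ α ^ p * u ^ p := by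
            exact mul_le_mul_of_nonneg_right (min_le_left _ _) hup.le
        _ = (α * u) ^ p := (Real.mul_rpow hα.le hu.le).symm
        _ ≤ x ^ p := Real.rpow_le_rpow (by positivity) h1 hp
    · calc x ^ p ≤ (β * u) ^ p := Real.rpow_le_rpow hx.le h2 hp
        _ = β ^ p * u ^ p := Real.mul_rpow hβ.le hu.le
        _ ≤ max (α ^ p) (β ^ p) * u ^ p :=
            mul_le_mul_of_nonneg_right (le_max_right _ _) hup.le
  · constructor
    · calc min (α ^ p) (β ^ p) * u ^ p ≤ β ^ p * u ^ p :=
            mul_le_mul_of_nonneg_right (min_le_right _ _) hup.le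
        _ = (β * u) ^ p := (Real.mul_rpow hβ.le hu.le).symm
        _ ≤ x ^ p := Real.rpow_le_rpow_of_nonpos hx h2 hp.le
    · calc x ^ p ≤ (α * u) ^ p :=
            Real.rpow_le_rpow_of_nonpos (mul_pos hα hu) h1 hp.le
        _ = α ^ p * u ^ p := Real.mul_rpow hα.le hu.le
        _ ≤ max (α ^ p) (β ^ p) * u ^ p :=
            mul_le_mul_of_nonneg_right (le_max_left _ _) hup.le

end helpers

section halves

variable (p : ℝ)

lemma half1 : IntegrableOn (fun θ => (Real.cos (θ/2) / Real.sin (θ/2)) ^ p)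
    (Ioo 0 (π/2)) volume ↔ -1 < -p := by
  have hπ := Real.pi_pos
  have hmeas : MeasurableSet (Ioo (0:ℝ) (π/2)) := measurableSet_Ioo
  -- bounds
  have key : ∀ θ ∈ Ioo (0:ℝ) (π/2),
      1 * θ⁻¹ ≤ Real.cos (θ/2) / Real.sin (θ/2) ∧
      Real.cos (θ/2) / Real.sin (θ/2) ≤ π * θ⁻¹ := by
    intro θ hθ
    obtain ⟨h0, h2⟩ := hθ
    have hsin_pos : 0 < Real.sin (θ/2) :=
      Real.sin_pos_of_pos_of_lt_pi (by linarith) (by linarith)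
    have hsin_le : Real.sin (θ/2) ≤ θ/2 := Real.sin_le (by linarith)
    have hcos_ge : (1:ℝ)/2 ≤ Real.cos (θ/2) := by
      have : Real.cos (π/4) ≤ Real.cos (θ/2) :=
        Real.cos_le_cos_of_nonneg_of_le_pi (by linarith) (by linarith) (by linarith)
      rw [Real.cos_pi_div_four] at this
      nlinarith [Real.sq_sqrt (by norm_num : (2:ℝ) ≥ 0), Real.sqrt_nonneg 2]
    have hcos_le : Real.cos (θ/2) ≤ 1 := Real.cos_le_one _
    have hsin_ge : θ/π ≤ Real.sin (θ/2) := by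
      have := Real.mul_le_sin (x := θ/2) (by linarith) (by linarith)
      calc θ/π = 2/π * (θ/2) := by field_simp
        _ ≤ Real.sin (θ/2) := this
    constructor
    · have h := div_le_div₀ ((by linarith : (0:ℝ) ≤ 1/2).trans hcos_ge)
        hcos_ge hsin_pos hsin_le
      calc 1 * θ⁻¹ = (1/2) / (θ/2) := by field_simp
        _ ≤ _ := h
    · have h := div_le_div₀ (by norm_num : (0:ℝ) ≤ 1) hcos_le
        (by positivity : (0:ℝ) < θ/π) hsin_ge
      calc Real.cos (θ/2) / Real.sin (θ/2) ≤ 1 / (θ/π) := h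
        _ = π * θ⁻¹ := by field_simp
  have hcontf : ContinuousOn (fun θ => (Real.cos (θ/2) / Real.sin (θ/2)) ^ p)
      (Ioo (0:ℝ) (π/2)) := by
    apply ContinuousOn.rpow_const
    · apply ContinuousOn.div
      · exact (Real.continuous_cos.comp (continuous_id.div_const 2)).continuousOn
      · exact (Real.continuous_sin.comp (continuous_id.div_const 2)).continuousOn
      · intro x hx
        exact (Real.sin_pos_of_pos_of_lt_pi (by linarith [hx.1]) (by linarith [hx.2])).ne'
    · intro x hx
      left
      have h := (key x hx).1
      have : (0:ℝ) < x⁻¹ := by simp [hx.1]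
      nlinarith
  have hcontg : ContinuousOn (fun θ : ℝ => (θ⁻¹) ^ p) (Ioo (0:ℝ) (π/2)) := by
    apply ContinuousOn.rpow_const
    · exact continuousOn_inv₀.mono (fun x hx => (ne_of_gt hx.1))
    · intro x hx
      left
      exact inv_ne_zero (ne_of_gt hx.1)
  have main : IntegrableOn (fun θ => (Real.cos (θ/2) / Real.sin (θ/2)) ^ p)
      (Ioo 0 (π/2)) volume ↔ IntegrableOn (fun θ : ℝ => (θ⁻¹) ^ p) (Ioo 0 (π/2)) volume := by
    refine iff_of_sandwich hmeas (hcontf.aestronglyMeasurable hmeas)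
      (hcontg.aestronglyMeasurable hmeas)
      (m := min ((1:ℝ) ^ p) (π ^ p)) (M := max ((1:ℝ) ^ p) (π ^ p))
      (lt_min (Real.rpow_pos_of_pos one_pos p) (Real.rpow_pos_of_pos hπ p)) ?_ ?_ ?_
    · intro x hx
      exact Real.rpow_nonneg (inv_nonneg.mpr hx.1.le) p
    · intro x hx
      exact (rpow_sandwich (p := p) (inv_pos.mpr hx.1) one_pos hπ (key x hx).1 (key x hx).2).1
    · intro x hx
      exact (rpow_sandwich (p := p) (inv_pos.mpr hx.1) one_pos hπ (key x hx).1 (key x hx).2).2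
  rw [main]
  rw [integrableOn_congr_fun (g := fun θ : ℝ => θ ^ (-p)) ?_ hmeas]
  · exact intervalIntegral.integrableOn_Ioo_rpow_iff (by linarith)
  · intro x hx
    simp only
    rw [Real.inv_rpow (le_of_lt hx.1), ← Real.rpow_neg (le_of_lt hx.1)]

lemma half2 : IntegrableOn (fun u => (Real.sin (u/2) / Real.cos (u/2)) ^ p)
    (Ioo 0 (π/2)) volume ↔ -1 < p := by
  have hπ := Real.pi_pos
  have hmeas : MeasurableSet (Ioo (0:ℝ) (π/2)) := measurableSet_Ioo
  have key : ∀ u ∈ Ioo (0:ℝ) (π/2),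
      π⁻¹ * u ≤ Real.sin (u/2) / Real.cos (u/2) ∧
      Real.sin (u/2) / Real.cos (u/2) ≤ 1 * u := by
    intro u hu
    obtain ⟨h0, h2⟩ := hu
    have hcos_pos : 0 < Real.cos (u/2) := by
      apply Real.cos_pos_of_mem_Ioo
      constructor <;> [linarith; linarith]
    have hsin_le : Real.sin (u/2) ≤ u/2 := Real.sin_le (by linarith)
    have hsin_pos : 0 < Real.sin (u/2) :=
      Real.sin_pos_of_pos_of_lt_pi (by linarith) (by linarith)
    have hcos_ge : (1:ℝ)/2 ≤ Real.cos (u/2) := by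
      have : Real.cos (π/4) ≤ Real.cos (u/2) :=
        Real.cos_le_cos_of_nonneg_of_le_pi (by linarith) (by linarith) (by linarith)
      rw [Real.cos_pi_div_four] at this
      nlinarith [Real.sq_sqrt (by norm_num : (2:ℝ) ≥ 0), Real.sqrt_nonneg 2]
    have hcos_le : Real.cos (u/2) ≤ 1 := Real.cos_le_one _
    have hsin_ge : u/π ≤ Real.sin (u/2) := by
      have := Real.mul_le_sin (x := u/2) (by linarith) (by linarith)
      calc u/π = 2/π * (u/2) := by field_simp
        _ ≤ Real.sin (u/2) := this
    constructor
    · have h := div_le_div₀ hsin_pos.le hsin_ge hcos_pos hcos_le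
      calc π⁻¹ * u = (u/π) / 1 := by field_simp
        _ ≤ _ := h
    · have h := div_le_div₀ (by linarith : (0:ℝ) ≤ u/2) hsin_le (by norm_num : (0:ℝ) < 1/2)
        hcos_ge
      calc Real.sin (u/2) / Real.cos (u/2) ≤ (u/2) / (1/2) := h
        _ = 1 * u := by field_simp
  have hcontf : ContinuousOn (fun u => (Real.sin (u/2) / Real.cos (u/2)) ^ p)
      (Ioo (0:ℝ) (π/2)) := by
    apply ContinuousOn.rpow_const
    · apply ContinuousOn.div
      · exact (Real.continuous_sin.comp (continuous_id.div_const 2)).continuousOn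
      · exact (Real.continuous_cos.comp (continuous_id.div_const 2)).continuousOn
      · intro x hx
        refine (Real.cos_pos_of_mem_Ioo ⟨by linarith [hx.1], by linarith [hx.2]⟩).ne'
    · intro x hx
      left
      have h := (key x hx).1
      have : (0:ℝ) < π⁻¹ * x := mul_pos (inv_pos.mpr hπ) hx.1
      nlinarith [hx.1]
  have hcontg : ContinuousOn (fun u : ℝ => u ^ p) (Ioo (0:ℝ) (π/2)) := by
    apply ContinuousOn.rpow_const continuousOn_id
    intro x hx
    left
    exact ne_of_gt hx.1
  have main : IntegrableOn (fun u => (Real.sin (u/2) / Real.cos (u/2)) ^ p)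
      (Ioo 0 (π/2)) volume ↔ IntegrableOn (fun u : ℝ => u ^ p) (Ioo 0 (π/2)) volume := by
    refine iff_of_sandwich hmeas (hcontf.aestronglyMeasurable hmeas)
      (hcontg.aestronglyMeasurable hmeas)
      (m := min ((π⁻¹:ℝ) ^ p) ((1:ℝ) ^ p)) (M := max ((π⁻¹:ℝ) ^ p) ((1:ℝ) ^ p))
      (lt_min (Real.rpow_pos_of_pos (inv_pos.mpr hπ) p) (Real.rpow_pos_of_pos one_pos p))
      ?_ ?_ ?_
    · intro x hx
      exact Real.rpow_nonneg hx.1.le p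
    · intro x hx
      exact (rpow_sandwich hx.1 (inv_pos.mpr hπ) one_pos (key x hx).1 (key x hx).2).1
    · intro x hx
      exact (rpow_sandwich hx.1 (inv_pos.mpr hπ) one_pos (key x hx).1 (key x hx).2).2
  rw [main]
  exact intervalIntegral.integrableOn_Ioo_rpow_iff (by linarith)

lemma core : IntegrableOn (fun θ => (Real.cos (θ/2) / Real.sin (θ/2)) ^ p)
    (Ioo 0 π) volume ↔ -1 < p ∧ p < 1 := by
  have hπ := Real.pi_pos
  have hset : (Ioo (0:ℝ) π : Set ℝ) =ᵐ[volume] (Ioo (0:ℝ) (π/2) ∪ Ioo (π/2) π : Set ℝ) := by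
    have h0 : (Ioo (0:ℝ) (π/2) ∪ Ioo (π/2) π : Set ℝ) = Ioo 0 π \ {π/2} := by
      ext x
      simp only [mem_union, mem_Ioo, mem_diff, mem_singleton_iff]
      constructor
      · rintro (⟨a, b⟩ | ⟨a, b⟩) <;> exact ⟨⟨by linarith, by linarith⟩, by intro h; linarith⟩
      · rintro ⟨⟨a, b⟩, hne⟩
        rcases lt_trichotomy x (π/2) with h | h | h
        · exact Or.inl ⟨a, h⟩
        · exact absurd h hne
        · exact Or.inr ⟨h, b⟩
    rw [h0]
    exact (MeasureTheory.diff_null_ae_eq_self (by simp)).symm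
  rw [congr_set_iff hset, integrableOn_union]
  have hrefl : IntegrableOn (fun θ => (Real.cos (θ/2) / Real.sin (θ/2)) ^ p)
      (Ioo (π/2) π) volume ↔
      IntegrableOn (fun u => (Real.sin (u/2) / Real.cos (u/2)) ^ p)
        (Ioo 0 (π/2)) volume := by
    have hpre : ((fun x : ℝ => π - x) ⁻¹' Ioo (π/2) π) = Ioo 0 (π/2) := by
      ext x
      simp only [mem_preimage, mem_Ioo]
      constructor <;> intro h <;> exact ⟨by linarith [h.1, h.2], by linarith [h.1, h.2]⟩
    have heq : (fun x : ℝ => (Real.cos ((π - x)/2) / Real.sin ((π - x)/2)) ^ p) =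
        fun u => (Real.sin (u/2) / Real.cos (u/2)) ^ p := by
      funext u
      rw [show (π - u)/2 = π/2 - u/2 by ring, Real.cos_pi_div_two_sub,
        Real.sin_pi_div_two_sub]
    have h1 : IntegrableOn
        (fun x : ℝ => (Real.cos ((π - x)/2) / Real.sin ((π - x)/2)) ^ p)
        (Ioo 0 (π/2)) volume ↔
        IntegrableOn (fun θ => (Real.cos (θ/2) / Real.sin (θ/2)) ^ p)
          (Ioo (π/2) π) volume := by
      rw [← hpre]
      exact refl_iff π (fun θ => (Real.cos (θ/2) / Real.sin (θ/2)) ^ p) (Ioo (π/2) π)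
    rw [← h1, heq]
  rw [half1 p, hrefl, half2 p]
  constructor <;> rintro ⟨h1, h2⟩ <;> exact ⟨by linarith, by linarith⟩

end halves


open Complex in
/-- The boundary function `θ ↦ |((1+e^{iθ})/(1-e^{iθ}))^a|²`
(principal complex power) is Lebesgue integrable over `(-π, π)` if and only if
`|Re(a)| < 1/2`; this is the criterion for `f_a(z) = ((1+z)/(1-z))^a ∈ H²`. -/
theorem eigenfunction_in_H2_iff
    (a : ℂ) :
    IntegrableOn
      (fun θ : ℝ =>
        ‖((1 + Complex.exp (θ * Complex.I)) / (1 - Complex.exp (θ * Complex.I))) ^ a‖ ^ 2)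
      (Set.Ioo (-Real.pi) Real.pi) volume
    ↔ |a.re| < 1 / 2 := by
  have hπ := Real.pi_pos
  set f : ℝ → ℝ := fun θ : ℝ =>
    ‖((1 + Complex.exp (θ * Complex.I)) / (1 - Complex.exp (θ * Complex.I))) ^ a‖ ^ 2 with hf
  set E : ℝ := Real.exp (π * a.im) with hE
  have hEne : E ≠ 0 := Real.exp_ne_zero _
  set cotp : ℝ → ℝ := fun θ => (Real.cos (θ/2) / Real.sin (θ/2)) ^ (2 * a.re) with hcotp
  -- split the interval
  have hset : (Ioo (-π) π : Set ℝ) =ᵐ[volume] (Ioo (-π) 0 ∪ Ioo 0 π : Set ℝ) := by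
    have h0 : (Ioo (-π) 0 ∪ Ioo 0 π : Set ℝ) = Ioo (-π) π \ {0} := by
      ext x
      simp only [Set.mem_union, Set.mem_Ioo, Set.mem_diff, Set.mem_singleton_iff]
      constructor
      · rintro (⟨h1, h2⟩ | ⟨h1, h2⟩) <;> exact ⟨⟨by linarith, by linarith⟩, by intro h; linarith⟩
      · rintro ⟨⟨h1, h2⟩, hne⟩
        rcases lt_trichotomy x 0 with h | h | h
        · exact Or.inl ⟨h1, h⟩
        · exact absurd h hne
        · exact Or.inr ⟨h, h2⟩
    rw [h0]
    exact (MeasureTheory.diff_null_ae_eq_self (by simp)).symm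
  rw [congr_set_iff hset, integrableOn_union]
  -- positive part
  have hpos : IntegrableOn f (Ioo 0 π) volume ↔ IntegrableOn cotp (Ioo 0 π) volume := by
    rw [integrableOn_congr_fun (g := fun θ => E⁻¹ * cotp θ) ?_ measurableSet_Ioo]
    · exact constMul_iff (inv_ne_zero hEne) cotp (Ioo 0 π)
    · intro θ hθ
      obtain ⟨h1, h2⟩ := hθ
      have hsin : 0 < Real.sin (θ/2) :=
        Real.sin_pos_of_pos_of_lt_pi (by linarith) (by linarith)
      have hcos : 0 < Real.cos (θ/2) :=
        Real.cos_pos_of_mem_Ioo ⟨by linarith, by linarith⟩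
      have hr : 0 < Real.cos (θ/2) / Real.sin (θ/2) := div_pos hcos hsin
      show f θ = E⁻¹ * cotp θ
      rw [hf]
      simp only
      rw [cot_id θ hsin.ne', norm_sq_cpow_pos a hr]
      rw [hcotp, hE]
      simp only
      rw [div_eq_mul_inv, mul_comm]
  -- negative part
  have hneg : IntegrableOn f (Ioo (-π) 0) volume ↔ IntegrableOn cotp (Ioo 0 π) volume := by
    have hpre : ((fun x : ℝ => 0 - x) ⁻¹' Ioo 0 π) = Ioo (-π) 0 := by
      ext x
      simp only [Set.mem_preimage, Set.mem_Ioo]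
      constructor <;> intro h <;> exact ⟨by linarith [h.1, h.2], by linarith [h.1, h.2]⟩
    have hrefl := refl_iff 0 (fun u => E * cotp u) (Ioo 0 π)
    rw [hpre] at hrefl
    rw [integrableOn_congr_fun (g := fun x => (fun u => E * cotp u) (0 - x)) ?_
      measurableSet_Ioo]
    · rw [hrefl]
      exact constMul_iff hEne cotp (Ioo 0 π)
    · intro θ hθ
      obtain ⟨h1, h2⟩ := hθ
      have hsin : Real.sin (θ/2) < 0 :=
        Real.sin_neg_of_neg_of_neg_pi_lt (by linarith) (by linarith)
      have hcos : 0 < Real.cos (θ/2) :=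
        Real.cos_pos_of_mem_Ioo ⟨by linarith, by linarith⟩
      have hr : Real.cos (θ/2) / Real.sin (θ/2) < 0 := div_neg_of_pos_of_neg hcos hsin
      show f θ = E * cotp (0 - θ)
      rw [hf]
      simp only
      rw [cot_id θ (ne_of_lt hsin), norm_sq_cpow_neg a hr]
      rw [hcotp, hE]
      simp only
      have harg : (0 - θ)/2 = -(θ/2) := by ring
      rw [harg, Real.cos_neg, Real.sin_neg]
      rw [show Real.cos (θ/2) / -Real.sin (θ/2) = -(Real.cos (θ/2) / Real.sin (θ/2)) by
        rw [div_neg]]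
      ring
  rw [hpos, hneg, core (2 * a.re), abs_lt]
  constructor
  · rintro ⟨⟨g1, g2⟩, _⟩
    exact ⟨by linarith, by linarith⟩
  · rintro ⟨g1, g2⟩
    exact ⟨⟨by linarith, by linarith⟩, ⟨by linarith, by linarith⟩⟩
end

section
/- Let μ > 1 be real and for each natural number n set r_n = (μⁿ − 1)/(μⁿ + 1). Then for every θ with 0 < |θ| ≤ π, the series ∑_{n=0}^{∞} (1 − r_n²)/(1 − 2 r_n cos θ + r_n²) converges and ∑_{n=0}^{∞} (1 − r_n²)/(1 − 2 r_n cos θ + r_n²) ≤ (16μ/(μ−1)) · (π/|θ|). That is, the sum of the Poisson kernels at the orbit points φ_μ^{∘n}(0) = r_n is at most (16μ/(μ−1))·π/|θ|. -/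
set_option maxHeartbeats 1000000


/-- For `μ > 1`, `r_n = (μⁿ-1)/(μⁿ+1)`, and `0 < |θ| ≤ π`, the sum of
the Poisson kernels at the orbit points `r_n = φ_μ^[n](0)` converges and satisfies
`∑_{n≥0} P_{r_n}(e^{iθ}) ≤ (16μ/(μ-1)) · (π/|θ|)`. -/
theorem poisson_kernel_orbit_sum_estimate
    (μ : ℝ) (hμ : 1 < μ) (r : ℕ → ℝ) (hr : ∀ n : ℕ, r n = (μ ^ n - 1) / (μ ^ n + 1))
    (θ : ℝ) (hθ0 : 0 < |θ|) (hθπ : |θ| ≤ Real.pi) :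
    Summable (fun n : ℕ => (1 - r n ^ 2) / (1 - 2 * r n * Real.cos θ + r n ^ 2)) ∧
    (∑' n : ℕ, (1 - r n ^ 2) / (1 - 2 * r n * Real.cos θ + r n ^ 2))
      ≤ (16 * μ / (μ - 1)) * (Real.pi / |θ|) := by
  have hπ := Real.pi_pos
  have hμ0 : (0:ℝ) < μ := lt_trans one_pos hμ
  have hc1 : Real.cos θ ≤ 1 := Real.cos_le_one θ
  have hcos : 2 * θ ^ 2 / Real.pi ^ 2 ≤ 1 - Real.cos θ := by
    have := Real.cos_le_one_sub_mul_cos_sq hθπ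
    have h : 2 / Real.pi ^ 2 * θ ^ 2 = 2 * θ ^ 2 / Real.pi ^ 2 := by ring
    linarith [h ▸ this]
  set f : ℕ → ℝ := fun n : ℕ => (1 - r n ^ 2) / (1 - 2 * r n * Real.cos θ + r n ^ 2) with hf
  have hpow : ∀ n, (1:ℝ) ≤ μ ^ n := fun n => one_le_pow₀ hμ.le
  have hpowpos : ∀ n, (0:ℝ) < μ ^ n := fun n => pow_pos hμ0 n
  have hden : ∀ n, (0:ℝ) < μ ^ n + 1 := fun n => by linarith [hpowpos n]
  have hr0 : ∀ n, 0 ≤ r n := fun n => by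
    rw [hr n]; exact div_nonneg (by linarith [hpow n]) (hden n).le
  have hr1 : ∀ n, r n < 1 := fun n => by
    rw [hr n, div_lt_one (hden n)]; linarith
  have hkey : ∀ n, (μ ^ n + 1) * (1 - r n) = 2 := fun n => by
    rw [hr n]; field_simp; ring
  have hD : ∀ n, 0 < 1 - 2 * r n * Real.cos θ + r n ^ 2 := fun n => by
    nlinarith [sq_nonneg (1 - r n), hr0 n, hr1 n, mul_nonneg (hr0 n) (sub_nonneg.2 hc1)]
  have hf_nonneg : ∀ n, 0 ≤ f n := fun n =>
    div_nonneg (by nlinarith [hr0 n, hr1 n]) (hD n).le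
  -- bound valid for all n
  have hbd_all : ∀ n, f n ≤ μ ^ n + 1 := by
    intro n
    rw [hf]
    rw [div_le_iff₀ (hD n)]
    nlinarith [hkey n, sq_nonneg (1 - r n), mul_nonneg (mul_nonneg (hden n).le (hr0 n)) (sub_nonneg.2 hc1), hr0 n, hr1 n]
  -- numerator formula
  have hnum : ∀ n, 1 - r n ^ 2 = 4 * μ ^ n / (μ ^ n + 1) ^ 2 := fun n => by
    rw [hr n]; field_simp; ring
  -- choose N
  obtain ⟨N₀, hN₀⟩ := pow_unbounded_of_one_lt (4 * Real.pi / |θ|) hμ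
  have hex : ∃ n, 4 * Real.pi / |θ| ≤ μ ^ n := ⟨N₀, hN₀.le⟩
  obtain ⟨N, hNspec, hNmin⟩ : ∃ N, 4 * Real.pi / |θ| ≤ μ ^ N ∧
      ∀ m, m < N → μ ^ m < 4 * Real.pi / |θ| :=
    ⟨Nat.find hex, Nat.find_spec hex, fun m hm => lt_of_not_ge (Nat.find_min hex hm)⟩
  have hA4 : (4:ℝ) ≤ 4 * Real.pi / |θ| := by
    rw [le_div_iff₀ hθ0]; nlinarith
  -- bound for n ≥ N
  have hbd_tail : ∀ n, N ≤ n → f n ≤ 2 * Real.pi ^ 2 / θ ^ 2 * (1 / μ) ^ n := by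
    intro n hn
    have hm4 : (4:ℝ) ≤ μ ^ n :=
      le_trans hA4 (hNspec.trans (pow_le_pow_right₀ hμ.le hn))
    have hrhalf : (1:ℝ) / 2 ≤ r n := by
      rw [hr n, le_div_iff₀ (hden n)]; linarith
    have h1 : 1 - r n ^ 2 ≤ 4 / μ ^ n := by
      rw [hnum n, div_le_div_iff₀ (by positivity) (hpowpos n)]
      nlinarith [hpowpos n]
    have h2 : 2 * θ ^ 2 / Real.pi ^ 2 ≤ 1 - 2 * r n * Real.cos θ + r n ^ 2 := by
      nlinarith [sq_nonneg (1 - r n), mul_nonneg (sub_nonneg.2 hrhalf) (sub_nonneg.2 hc1)]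
    have hθ2 : (0:ℝ) < θ ^ 2 := by rw [← sq_abs]; positivity
    have h3 : f n ≤ (4 / μ ^ n) / (2 * θ ^ 2 / Real.pi ^ 2) := by
      apply div_le_div₀ (by positivity) h1 (div_pos (by linarith) (by positivity)) h2
    refine h3.trans_eq ?_
    have hθne : θ ≠ 0 := by intro h; rw [h] at hθ0; simp at hθ0
    rw [one_div, inv_pow]
    field_simp
    ring
  -- summability
  have hgeo : Summable (fun n : ℕ => (1 / μ) ^ n) :=
    summable_geometric_of_lt_one (by positivity) ((div_lt_one hμ0).2 hμ)
  have hg : Summable (fun n : ℕ => 2 * Real.pi ^ 2 / θ ^ 2 * (1 / μ) ^ n) := hgeo.mul_left _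
  have hsum : Summable f := by
    rw [← summable_nat_add_iff N]
    exact Summable.of_nonneg_of_le (fun n => hf_nonneg _)
      (fun n => hbd_tail (n + N) (Nat.le_add_left N n))
      ((summable_nat_add_iff N).2 hg)
  refine ⟨hsum, ?_⟩
  rw [← Summable.sum_add_tsum_nat_add N hsum]
  have hμ1 : (0:ℝ) < μ - 1 := by linarith
  -- head bound
  have hhead : ∑ i ∈ Finset.range N, f i ≤ 8 * μ / (μ - 1) * (Real.pi / |θ|) := by
    have h1 : ∑ i ∈ Finset.range N, f i ≤ ∑ i ∈ Finset.range N, 2 * μ ^ i := by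
      apply Finset.sum_le_sum
      intro i _
      exact (hbd_all i).trans (by linarith [hpow i])
    have h2 : ∑ i ∈ Finset.range N, 2 * μ ^ i = 2 * ((μ ^ N - 1) / (μ - 1)) := by
      rw [← Finset.mul_sum, geom_sum_eq hμ.ne']
    have hμN : μ ^ N ≤ μ * (4 * Real.pi / |θ|) := by
      rcases Nat.eq_zero_or_pos N with h0 | h1
      · rw [h0, pow_zero]; nlinarith
      · have hm := hNmin (N - 1) (Nat.sub_lt h1 one_pos)
        have hN1 : N - 1 + 1 = N := Nat.succ_pred_eq_of_pos h1
        have hps : μ ^ (N - 1 + 1) = μ ^ (N - 1) * μ := pow_succ μ (N - 1)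
        rw [hN1] at hps
        calc μ ^ N = μ * μ ^ (N - 1) := by rw [hps]; ring
          _ ≤ μ * (4 * Real.pi / |θ|) := mul_le_mul_of_nonneg_left hm.le hμ0.le
    calc ∑ i ∈ Finset.range N, f i ≤ 2 * ((μ ^ N - 1) / (μ - 1)) := by rw [← h2]; exact h1
      _ ≤ 2 * ((μ * (4 * Real.pi / |θ|)) / (μ - 1)) := by
          gcongr
          linarith
      _ = 8 * μ / (μ - 1) * (Real.pi / |θ|) := by
          field_simp
          ring
  -- tail bound
  have htail : ∑' n : ℕ, f (n + N) ≤ 1 / 2 * (μ / (μ - 1)) * (Real.pi / |θ|) := by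
    have h1 : ∑' n : ℕ, f (n + N) ≤ ∑' n : ℕ, 2 * Real.pi ^ 2 / θ ^ 2 * (1 / μ) ^ (n + N) := by
      apply Summable.tsum_le_tsum (fun n => hbd_tail (n + N) (Nat.le_add_left N n))
        ((summable_nat_add_iff N).2 hsum) ((summable_nat_add_iff N).2 hg)
    have h2 : ∑' n : ℕ, 2 * Real.pi ^ 2 / θ ^ 2 * (1 / μ) ^ (n + N)
        = 2 * Real.pi ^ 2 / θ ^ 2 * (1 / μ) ^ N * (1 - 1 / μ)⁻¹ := by
      have : ∀ n : ℕ, 2 * Real.pi ^ 2 / θ ^ 2 * (1 / μ) ^ (n + N)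
          = (2 * Real.pi ^ 2 / θ ^ 2 * (1 / μ) ^ N) * (1 / μ) ^ n := by
        intro n; rw [pow_add]; ring
      rw [tsum_congr this, tsum_mul_left,
        tsum_geometric_of_lt_one (by positivity) ((div_lt_one hμ0).2 hμ)]
    have hinv : ((1:ℝ) - 1 / μ)⁻¹ = μ / (μ - 1) := by
      field_simp
    have hpN : (1 / μ) ^ N ≤ |θ| / (4 * Real.pi) := by
      rw [div_pow, one_pow, div_le_div_iff₀ (hpowpos N) (by positivity)]
      have h4 : 4 * Real.pi ≤ μ ^ N * |θ| := by
        rw [div_le_iff₀ hθ0] at hNspec; linarith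
      nlinarith
    have hθsq : θ ^ 2 = |θ| ^ 2 := (sq_abs θ).symm
    calc ∑' n : ℕ, f (n + N) ≤ 2 * Real.pi ^ 2 / θ ^ 2 * (1 / μ) ^ N * (1 - 1 / μ)⁻¹ := by
          rw [← h2]; exact h1
      _ ≤ 2 * Real.pi ^ 2 / θ ^ 2 * (|θ| / (4 * Real.pi)) * (μ / (μ - 1)) := by
          rw [hinv]
          gcongr
      _ = 1 / 2 * (μ / (μ - 1)) * (Real.pi / |θ|) := by
          rw [hθsq]
          have habs : 2 * Real.pi ^ 2 / |θ| ^ 2 * (|θ| / (4 * Real.pi))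
              = 1 / 2 * (Real.pi / |θ|) := by
            rw [div_mul_div_comm, div_mul_div_comm,
              div_eq_div_iff (by positivity) (by positivity)]
            ring
          rw [habs]; ring
  have hX : 0 < Real.pi / |θ| := by positivity
  have hK : 0 < μ / (μ - 1) := by positivity
  calc ∑ i ∈ Finset.range N, f i + ∑' n : ℕ, f (n + N)
      ≤ 8 * μ / (μ - 1) * (Real.pi / |θ|) + 1 / 2 * (μ / (μ - 1)) * (Real.pi / |θ|) :=
        add_le_add hhead htail
    _ = 17 / 2 * (μ / (μ - 1) * (Real.pi / |θ|)) := by ring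
    _ ≤ 16 * (μ / (μ - 1) * (Real.pi / |θ|)) := by nlinarith [mul_pos hK hX]
    _ = 16 * μ / (μ - 1) * (Real.pi / |θ|) := by ring
end

section
/- Let μ > 1 be real, let 0 < ε ≤ 1/2, and set r_n = (μⁿ − 1)/(μⁿ + 1) for natural numbers n. Let w : [−π, π] → [0, ∞] be measurable with ∫_{−π}^{π} w(θ)/|θ|^{1+2ε} dθ < ∞. Then there exists a constant C ≥ 0 such that for every natural number n, ∫_{−π}^{π} w(θ) · (1 − r_n²)/(1 − 2 r_n cos θ + r_n²) dθ ≤ C · μ^{−2nε}. (Applied to w = |f|², this says ‖f∘φ_μ^{∘n}‖_{H²} = O(μ^{−nε}) whenever f ∈ (z−1)^{1/2+ε}H².) -/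
set_option maxHeartbeats 1000000

open MeasureTheory ENNReal

section PointwiseKey

open Real

lemma poisson_pointwise_key
    (μ : ℝ) (hμ : 1 < μ) (ε : ℝ) (hε0 : 0 < ε) (hε : ε ≤ 1 / 2)
    (n : ℕ) (θ : ℝ) (hθπ : |θ| ≤ π) (hθ0 : θ ≠ 0) :
    (1 - ((μ ^ n - 1) / (μ ^ n + 1)) ^ 2) /
      (1 - 2 * ((μ ^ n - 1) / (μ ^ n + 1)) * Real.cos θ + ((μ ^ n - 1) / (μ ^ n + 1)) ^ 2)
    ≤ 16 * π ^ 2 * μ ^ (-2 * (n : ℝ) * ε) / |θ| ^ (1 + 2 * ε) := by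
  have hπ : (1 : ℝ) < π := by linarith [Real.pi_gt_three]
  have hπ2 : (0:ℝ) ≤ π ^ 2 - 1 := sub_nonneg.mpr (one_le_pow₀ hπ.le)
  set m : ℝ := μ ^ n with hm_def
  have hm : 1 ≤ m := one_le_pow₀ hμ.le
  have hm0 : 0 < m := by linarith
  set δ : ℝ := 2 / (m + 1) with hδ_def
  have hδ0 : 0 < δ := by positivity
  have hδ1 : δ ≤ 1 := by rw [hδ_def, div_le_one (by linarith)]; linarith
  set R : ℝ := (m - 1) / (m + 1) with hR_def
  have hRδ : R = 1 - δ := by rw [hR_def, hδ_def]; field_simp; ring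
  have hR0 : 0 ≤ R := by rw [hRδ]; linarith
  have hR1 : R ≤ 1 := by rw [hRδ]; linarith
  set ν : ℝ := μ ^ (-(n : ℝ)) with hν_def
  have hν_eq : ν = 1 / m := by
    rw [hν_def, Real.rpow_neg (by linarith), Real.rpow_natCast, one_div]
  have hν0 : 0 < ν := by rw [hν_eq]; positivity
  have hν1 : ν ≤ 1 := by rw [hν_eq]; exact div_le_one_of_le₀ hm (by linarith)
  set M : ℝ := μ ^ (-2 * (n : ℝ) * ε) with hM_def
  have hM_eq : M = ν ^ (2 * ε) := by
    rw [hM_def, hν_def, ← Real.rpow_mul (by linarith : (0:ℝ) ≤ μ)]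
    ring_nf
  have hM0 : 0 < M := by rw [hM_eq]; positivity
  have hδν_hi : δ ≤ 2 * ν := by
    rw [hν_eq, hδ_def, mul_one_div, div_le_div_iff₀ (by linarith) hm0]
    linarith
  have hδ2ε : δ ^ (2 * ε) ≤ 2 * M := by
    calc δ ^ (2 * ε) ≤ (2 * ν) ^ (2 * ε) :=
          Real.rpow_le_rpow hδ0.le hδν_hi (by positivity)
      _ = 2 ^ (2 * ε) * ν ^ (2 * ε) := Real.mul_rpow (by norm_num) hν0.le
      _ ≤ 2 ^ (1 : ℝ) * M := by
          rw [hM_eq]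
          gcongr
          · norm_num
          · linarith
      _ = 2 * M := by norm_num
  set t : ℝ := |θ| with ht_def
  have ht0 : 0 < t := abs_pos.mpr hθ0
  have htπ : t ≤ π := hθπ
  set D : ℝ := 1 - 2 * R * Real.cos θ + R ^ 2 with hD_def
  have hcos : Real.cos θ ≤ 1 - 2 / π ^ 2 * θ ^ 2 := Real.cos_le_one_sub_mul_cos_sq hθπ
  have hcos1 : Real.cos θ ≤ 1 := Real.cos_le_one θ
  have hDδ : δ ^ 2 ≤ D := by
    have h : D = (1 - R) ^ 2 + 2 * R * (1 - Real.cos θ) := by rw [hD_def]; ring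
    have hp : 0 ≤ (1 - δ) * (1 - Real.cos θ) :=
      mul_nonneg (by linarith) (by linarith)
    rw [h, hRδ]
    linarith only [hp]
  have hD0 : 0 < D := lt_of_lt_of_le (by positivity) hDδ
  have hnum : 1 - R ^ 2 ≤ 2 * δ := by rw [hRδ]; linarith only [sq_nonneg δ]
  have hDmul : 16 * π ^ 2 * M * δ ^ 2 ≤ 16 * π ^ 2 * M * D :=
    mul_le_mul_of_nonneg_left hDδ (by positivity)
  rw [div_le_div_iff₀ hD0 (Real.rpow_pos_of_pos ht0 _)]
  have htsplit : t ^ (1 + 2 * ε) = t * t ^ (2 * ε) := by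
    rw [Real.rpow_add ht0, Real.rpow_one]
  by_cases hδhalf : 1 / 2 < δ
  · -- Case 3: δ > 1/2
    have hνM : ν ≤ M := by
      rw [hM_eq]
      calc ν = ν ^ (1 : ℝ) := (Real.rpow_one ν).symm
        _ ≤ ν ^ (2 * ε) := Real.rpow_le_rpow_of_exponent_ge hν0 hν1 (by linarith)
    have hM3 : 1 / 4 ≤ M := by linarith only [hνM, hδν_hi, hδhalf]
    have htp : t ^ (1 + 2 * ε) ≤ π ^ 2 := by
      calc t ^ (1 + 2 * ε) ≤ π ^ (1 + 2 * ε) :=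
            Real.rpow_le_rpow ht0.le htπ (by linarith)
        _ ≤ π ^ (2 : ℝ) := Real.rpow_le_rpow_of_exponent_le hπ.le (by linarith)
        _ = π ^ 2 := by
            rw [show (2:ℝ) = ((2:ℕ):ℝ) by norm_num, Real.rpow_natCast]
    have htp0 : 0 < t ^ (1 + 2 * ε) := Real.rpow_pos_of_pos ht0 _
    have h8 : 1 ≤ 8 * M * δ := by
      have hp : 0 ≤ (M - 1/4) * (δ - 1/2) := mul_nonneg (by linarith) (by linarith)
      linarith only [hp, hM3, hδhalf]
    calc (1 - R ^ 2) * t ^ (1 + 2 * ε) ≤ 2 * δ * π ^ 2 := by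
          apply mul_le_mul hnum htp htp0.le (by positivity)
      _ = 2 * δ * π ^ 2 * 1 := by ring
      _ ≤ 2 * δ * π ^ 2 * (8 * M * δ) :=
          mul_le_mul_of_nonneg_left h8 (by positivity)
      _ = 16 * π ^ 2 * M * δ ^ 2 := by ring
      _ ≤ 16 * π ^ 2 * M * D := hDmul
  · push_neg at hδhalf
    by_cases htδ : t ≤ δ
    · -- Case 1: t ≤ δ
      have h1 : t ^ (1 + 2 * ε) ≤ δ * δ ^ (2 * ε) := by
        rw [htsplit]
        exact mul_le_mul htδ (Real.rpow_le_rpow ht0.le htδ (by positivity))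
          (Real.rpow_pos_of_pos ht0 _).le hδ0.le
      calc (1 - R ^ 2) * t ^ (1 + 2 * ε) ≤ 2 * δ * (δ * δ ^ (2 * ε)) := by
            apply mul_le_mul hnum h1 (Real.rpow_pos_of_pos ht0 _).le (by positivity)
        _ = 2 * δ ^ (2 * ε) * δ ^ 2 := by ring
        _ ≤ 2 * (2 * M) * δ ^ 2 := by
            apply mul_le_mul_of_nonneg_right _ (sq_nonneg δ)
            linarith only [hδ2ε]
        _ ≤ 16 * π ^ 2 * M * δ ^ 2 := by
            have ha : 0 ≤ (π ^ 2 - 1) * (M * δ ^ 2) :=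
              mul_nonneg hπ2 (mul_nonneg hM0.le (sq_nonneg δ))
            have hb : 0 ≤ M * δ ^ 2 := mul_nonneg hM0.le (sq_nonneg δ)
            linarith only [ha, hb]
        _ ≤ 16 * π ^ 2 * M * D := hDmul
    · -- Case 2: δ ≤ 1/2 and δ < t
      push_neg at htδ
      have hRhalf : (1:ℝ)/2 ≤ R := by rw [hRδ]; linarith
      have hcos' : 2 * θ ^ 2 ≤ π ^ 2 * (1 - Real.cos θ) := by
        have hp := mul_le_mul_of_nonneg_left
          (show 2 / π ^ 2 * θ ^ 2 ≤ 1 - Real.cos θ by linarith) (sq_nonneg π)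
        have he : π ^ 2 * (2 / π ^ 2 * θ ^ 2) = 2 * θ ^ 2 := by
          field_simp
        linarith only [hp, he]
      have hDt : 2 * t ^ 2 ≤ π ^ 2 * D := by
        have hDeq : D = (1 - R) ^ 2 + 2 * R * (1 - Real.cos θ) := by rw [hD_def]; ring
        have ht2 : t ^ 2 = θ ^ 2 := sq_abs θ
        have h1 : R * (2 * θ ^ 2) ≤ R * (π ^ 2 * (1 - Real.cos θ)) :=
          mul_le_mul_of_nonneg_left hcos' hR0
        have h2 : 0 ≤ (2 * R - 1) * θ ^ 2 := mul_nonneg (by linarith) (sq_nonneg θ)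
        have h3 : (0:ℝ) ≤ π ^ 2 * (1 - R) ^ 2 := by positivity
        rw [hDeq, ht2]
        linarith only [h1, h2, h3]
      have ht2ε : δ * t ^ (2 * ε - 1) ≤ 2 * M := by
        calc δ * t ^ (2 * ε - 1) ≤ δ * δ ^ (2 * ε - 1) :=
              mul_le_mul_of_nonneg_left
                (Real.rpow_le_rpow_of_nonpos hδ0 htδ.le (by linarith)) hδ0.le
          _ = δ ^ (1 : ℝ) * δ ^ (2 * ε - 1) := by rw [Real.rpow_one]
          _ = δ ^ (2 * ε) := by rw [← Real.rpow_add hδ0]; ring_nf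
          _ ≤ 2 * M := hδ2ε
      have htsplit2 : t ^ (2 * ε) = t ^ (2 * ε - 1) * t := by
        rw [← Real.rpow_add_one ht0.ne']; ring_nf
      calc (1 - R ^ 2) * t ^ (1 + 2 * ε) ≤ 2 * δ * (t * t ^ (2 * ε)) := by
            rw [htsplit]
            exact mul_le_mul_of_nonneg_right hnum (by positivity)
        _ = (δ * t ^ (2 * ε - 1)) * (2 * t ^ 2) := by rw [htsplit2]; ring
        _ ≤ (2 * M) * (2 * t ^ 2) :=
            mul_le_mul_of_nonneg_right ht2ε (by positivity)
        _ ≤ 16 * π ^ 2 * M * D := by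
            have hq := mul_le_mul_of_nonneg_left hDt (by positivity : (0:ℝ) ≤ 2 * M)
            have hs : (0:ℝ) ≤ π ^ 2 * (M * D) :=
              mul_nonneg (sq_nonneg π) (mul_nonneg hM0.le hD0.le)
            linarith only [hq, hs]

end PointwiseKey

/-- Let `μ > 1`, `0 < ε ≤ 1/2`, `r_n = (μⁿ-1)/(μⁿ+1)`, and let
`w : [-π,π] → [0,∞]` be measurable with `∫_{-π}^{π} w(θ)/|θ|^{1+2ε} dθ < ∞`. Then there
is a constant `C ≥ 0` with `∫_{-π}^{π} w(θ)·P_{r_n}(e^{iθ}) dθ ≤ C·μ^{-2nε}` for all `n`.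
(For `w = |f|²` this says `‖f∘φ_μ^[n]‖ = O(μ^{-nε})` when `f ∈ (z-1)^{1/2+ε}H²`.) -/
theorem weighted_poisson_integral_decay
    (μ : ℝ) (hμ : 1 < μ) (ε : ℝ) (hε0 : 0 < ε) (hε : ε ≤ 1 / 2)
    (r : ℕ → ℝ) (hr : ∀ n : ℕ, r n = (μ ^ n - 1) / (μ ^ n + 1))
    (w : ℝ → ℝ≥0∞) (hw : Measurable w)
    (hint : (∫⁻ θ in Set.Icc (-Real.pi) Real.pi,
        w θ / ENNReal.ofReal (|θ| ^ (1 + 2 * ε))) ≠ ⊤) :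
    ∃ C : ℝ, 0 ≤ C ∧ ∀ n : ℕ,
      (∫⁻ θ in Set.Icc (-Real.pi) Real.pi,
          w θ * ENNReal.ofReal ((1 - r n ^ 2) / (1 - 2 * r n * Real.cos θ + r n ^ 2)))
        ≤ ENNReal.ofReal (C * μ ^ (-2 * (n : ℝ) * ε)) := by
  set I := ∫⁻ θ in Set.Icc (-Real.pi) Real.pi,
      w θ / ENNReal.ofReal (|θ| ^ (1 + 2 * ε)) with hI
  have hπ0 : (0:ℝ) < Real.pi := Real.pi_pos
  refine ⟨16 * Real.pi ^ 2 * I.toReal, by positivity, fun n => ?_⟩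
  set M : ℝ := μ ^ (-2 * (n:ℝ) * ε) with hM
  have hμ0 : (0:ℝ) < μ := by linarith
  have hM0 : 0 < M := Real.rpow_pos_of_pos hμ0 _
  have h0 : ∀ᵐ θ : ℝ, θ ≠ 0 := by
    rw [ae_iff]
    have he : {a : ℝ | ¬ a ≠ 0} = {0} := by ext x; simp
    rw [he]
    exact measure_singleton 0
  have hstep : ∀ᵐ θ ∂(volume.restrict (Set.Icc (-Real.pi) Real.pi)),
      w θ * ENNReal.ofReal ((1 - r n ^ 2) / (1 - 2 * r n * Real.cos θ + r n ^ 2))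
      ≤ ENNReal.ofReal (16 * Real.pi ^ 2 * M) *
          (w θ / ENNReal.ofReal (|θ| ^ (1 + 2 * ε))) := by
    filter_upwards [ae_restrict_mem measurableSet_Icc, ae_restrict_of_ae h0] with θ hθ hθ0
    have hkey := poisson_pointwise_key μ hμ ε hε0 hε n θ
      (abs_le.mpr ⟨hθ.1, hθ.2⟩) hθ0
    rw [hr n]
    have htp : 0 < |θ| ^ (1 + 2 * ε) := Real.rpow_pos_of_pos (abs_pos.mpr hθ0) _
    calc w θ * ENNReal.ofReal ((1 - ((μ ^ n - 1) / (μ ^ n + 1)) ^ 2) /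
            (1 - 2 * ((μ ^ n - 1) / (μ ^ n + 1)) * Real.cos θ +
              ((μ ^ n - 1) / (μ ^ n + 1)) ^ 2))
        ≤ w θ * ENNReal.ofReal (16 * Real.pi ^ 2 * M / |θ| ^ (1 + 2 * ε)) :=
          mul_le_mul_right (ENNReal.ofReal_le_ofReal hkey) _
      _ = ENNReal.ofReal (16 * Real.pi ^ 2 * M) *
            (w θ / ENNReal.ofReal (|θ| ^ (1 + 2 * ε))) := by
          rw [ENNReal.ofReal_div_of_pos htp, div_eq_mul_inv, div_eq_mul_inv]
          ring
  calc (∫⁻ θ in Set.Icc (-Real.pi) Real.pi,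
        w θ * ENNReal.ofReal ((1 - r n ^ 2) / (1 - 2 * r n * Real.cos θ + r n ^ 2)))
      ≤ ∫⁻ θ in Set.Icc (-Real.pi) Real.pi,
          ENNReal.ofReal (16 * Real.pi ^ 2 * M) *
            (w θ / ENNReal.ofReal (|θ| ^ (1 + 2 * ε))) := lintegral_mono_ae hstep
    _ = ENNReal.ofReal (16 * Real.pi ^ 2 * M) * I :=
        lintegral_const_mul' _ _ ENNReal.ofReal_ne_top
    _ = ENNReal.ofReal (16 * Real.pi ^ 2 * I.toReal * M) := by
        rw [show 16 * Real.pi ^ 2 * I.toReal * M = 16 * Real.pi ^ 2 * M * I.toReal by ring,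
          ENNReal.ofReal_mul (p := 16 * Real.pi ^ 2 * M) (q := I.toReal) (by positivity),
          ENNReal.ofReal_toReal hint]
end

section
/- Let μ > 1 be real and for each integer n ∈ ℤ set r_n = (μⁿ − 1)/(μⁿ + 1) ∈ (−1, 1). Let w : ∂𝔻 → [0, ∞] be measurable with ∫_{∂𝔻} w(ζ)/(|ζ − 1|·|ζ + 1|) dm(ζ) < ∞. Then ∑_{n ∈ ℤ} ∫_{∂𝔻} w(ζ) · P_{r_n}(ζ) dm(ζ) < ∞, where P_ρ(ζ) = (1 − ρ²)/|ζ − ρ|². (Applied to w = |f|², this says ∑_{n∈ℤ} ‖f ∘ φ_μ^{∘n}‖²_{H²} < ∞ whenever f ∈ √((z−1)(z+1)) H².) -/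
open MeasureTheory ENNReal

/-- Normalized arclength (Haar) measure on the unit circle `∂𝔻 ⊆ ℂ`, of total mass 1. -/
noncomputable def circleMeasure : Measure ℂ :=
  Measure.map (fun θ : ℝ => Complex.exp (θ * Complex.I))
    ((ENNReal.ofReal (2 * Real.pi))⁻¹ • volume.restrict (Set.Ioc (-Real.pi) Real.pi))



-- geometric tsum over integers ≥ n₀
lemma tsum_int_geo_ge (Q : ℝ≥0∞) (n₀ : ℤ) :
    ∑' n : ℤ, (if n₀ ≤ n then Q ^ (n - n₀).toNat else 0) = (1 - Q)⁻¹ := by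
  have hinj : Function.Injective (fun k : ℕ => n₀ + (k : ℤ)) := by
    intro a b h; simpa using h
  rw [← Function.Injective.tsum_eq hinj, ← ENNReal.tsum_geometric Q]
  · apply tsum_congr; intro k; simp
  · intro n hn
    simp only [Function.mem_support, ne_eq, ite_eq_right_iff, not_forall] at hn
    obtain ⟨h1, -⟩ := hn
    refine ⟨(n - n₀).toNat, ?_⟩
    simp only []
    omega

lemma tsum_int_geo_lt (Q : ℝ≥0∞) (n₀ : ℤ) :
    ∑' n : ℤ, (if n < n₀ then Q ^ (n₀ - 1 - n).toNat else 0) = (1 - Q)⁻¹ := by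
  have hinj : Function.Injective (fun k : ℕ => n₀ - 1 - (k : ℤ)) := by
    intro a b h; simpa using h
  rw [← Function.Injective.tsum_eq hinj, ← ENNReal.tsum_geometric Q]
  · apply tsum_congr; intro k
    have : n₀ - 1 - (k : ℤ) < n₀ := by omega
    simp [this]
  · intro n hn
    simp only [Function.mem_support, ne_eq, ite_eq_right_iff, not_forall] at hn
    obtain ⟨h1, -⟩ := hn
    refine ⟨(n₀ - 1 - n).toNat, ?_⟩
    simp only []
    omega

lemma tsum_bound (μ : ℝ) (hμ : 1 < μ) (u v : ℝ) (hu : 0 < u) (hv : 0 < v) :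
    ∑' n : ℤ, ENNReal.ofReal (2 * μ ^ n / ((μ ^ n) ^ 2 * u + v)) ≤
      ENNReal.ofReal (4 * μ / ((μ - 1) * Real.sqrt (u * v))) := by
  have hμ0 : (0:ℝ) < μ := by linarith
  have hμne : μ ≠ 0 := ne_of_gt hμ0
  set s : ℝ := Real.sqrt (u * v) with hsdef
  have hs : 0 < s := Real.sqrt_pos.2 (mul_pos hu hv)
  have hsu : 0 < Real.sqrt u := Real.sqrt_pos.2 hu
  have hsv : 0 < Real.sqrt v := Real.sqrt_pos.2 hv
  have hsuv : s = Real.sqrt u * Real.sqrt v := Real.sqrt_mul hu.le v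
  set W : ℝ := Real.sqrt v / Real.sqrt u with hWdef
  have hW : 0 < W := div_pos hsv hsu
  set n₀ : ℤ := ⌈Real.logb μ W⌉ with hn₀def
  have hμ1 : μ ≠ 1 := ne_of_gt hμ
  have h1 : W ≤ μ ^ n₀ := by
    have hle : Real.logb μ W ≤ (n₀ : ℝ) := Int.le_ceil _
    calc W = μ ^ (Real.logb μ W) := (Real.rpow_logb hμ0 hμ1 hW).symm
      _ ≤ μ ^ ((n₀ : ℝ)) := Real.rpow_le_rpow_of_exponent_le hμ.le hle
      _ = μ ^ n₀ := Real.rpow_intCast μ n₀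
  have h2 : μ ^ (n₀ - 1) ≤ W := by
    have hle : ((n₀ - 1 : ℤ) : ℝ) ≤ Real.logb μ W := by
      push_cast
      have := Int.ceil_lt_add_one (Real.logb μ W)
      linarith
    calc μ ^ (n₀ - 1) = μ ^ (((n₀ - 1 : ℤ)) : ℝ) := (Real.rpow_intCast μ _).symm
      _ ≤ μ ^ (Real.logb μ W) := Real.rpow_le_rpow_of_exponent_le hμ.le hle
      _ = W := Real.rpow_logb hμ0 hμ1 hW
  have hsu2 : s ≤ μ ^ n₀ * u := by
    have : W * u = s := by
      rw [hWdef, hsuv]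
      field_simp
      nlinarith [Real.mul_self_sqrt hu.le]
    nlinarith
  have hWs : W * s = v := by
    rw [hWdef, hsuv]
    field_simp
    nlinarith [Real.mul_self_sqrt hv.le]
  set Q : ℝ≥0∞ := ENNReal.ofReal μ⁻¹ with hQdef
  have key : ∀ n : ℤ, ENNReal.ofReal (2 * μ ^ n / ((μ ^ n) ^ 2 * u + v)) ≤
      ENNReal.ofReal (2 / s) *
        ((if n₀ ≤ n then Q ^ (n - n₀).toNat else 0) +
          (if n < n₀ then Q ^ (n₀ - 1 - n).toNat else 0)) := by
    intro n
    have ht : (0:ℝ) < μ ^ n := zpow_pos hμ0 n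
    have hden : (0:ℝ) < (μ ^ n) ^ 2 * u + v := by positivity
    by_cases hn : n₀ ≤ n
    · have hn' : ¬ (n < n₀) := not_lt.mpr hn
      simp only [if_pos hn, if_neg hn', add_zero, hQdef]
      rw [← ENNReal.ofReal_pow (by positivity), ← ENNReal.ofReal_mul (by positivity)]
      apply ENNReal.ofReal_le_ofReal
      set k : ℕ := (n - n₀).toNat with hk
      have hkz : (k : ℤ) = n - n₀ := Int.toNat_of_nonneg (by omega)
      have hpow : μ⁻¹ ^ k = (μ ^ (n - n₀ : ℤ))⁻¹ := by
        rw [inv_pow, ← zpow_natCast μ k, hkz]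
      rw [hpow]
      have hz : μ ^ (n - n₀ : ℤ) > 0 := zpow_pos hμ0 _
      rw [show (2:ℝ) / s * (μ ^ (n - n₀ : ℤ))⁻¹ = 2 / (s * μ ^ (n - n₀ : ℤ)) by
        field_simp]
      have hstep : s * μ ^ (n - n₀ : ℤ) ≤ μ ^ n * u := by
        have : μ ^ n₀ * u * μ ^ (n - n₀ : ℤ) = μ ^ n * u := by
          rw [show μ ^ n₀ * u * μ ^ (n - n₀ : ℤ) = μ ^ n₀ * μ ^ (n - n₀ : ℤ) * u by ring,
            ← zpow_add₀ hμne]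
          congr 2
          omega
        nlinarith
      calc 2 * μ ^ n / ((μ ^ n) ^ 2 * u + v) ≤ 2 * μ ^ n / ((μ ^ n) ^ 2 * u) := by
            apply div_le_div_of_nonneg_left (by positivity) (by positivity) (by nlinarith)
        _ = 2 / (μ ^ n * u) := by field_simp
        _ ≤ 2 / (s * μ ^ (n - n₀ : ℤ)) := by
            apply div_le_div_of_nonneg_left (by norm_num) (by positivity) hstep
    · have hn' : n < n₀ := not_le.mp hn
      simp only [if_neg hn, if_pos hn', zero_add, hQdef]
      rw [← ENNReal.ofReal_pow (by positivity), ← ENNReal.ofReal_mul (by positivity)]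
      apply ENNReal.ofReal_le_ofReal
      set k : ℕ := (n₀ - 1 - n).toNat with hk
      have hkz : (k : ℤ) = n₀ - 1 - n := Int.toNat_of_nonneg (by omega)
      have hpow : μ⁻¹ ^ k = (μ ^ (n₀ - 1 - n : ℤ))⁻¹ := by
        rw [inv_pow, ← zpow_natCast μ k, hkz]
      rw [hpow]
      have hz : (0:ℝ) < μ ^ (n₀ - 1 - n : ℤ) := zpow_pos hμ0 _
      have hsplit : μ ^ (n₀ - 1 : ℤ) = μ ^ n * μ ^ (n₀ - 1 - n : ℤ) := by
        rw [← zpow_add₀ hμne]; congr 1; omega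
      calc 2 * μ ^ n / ((μ ^ n) ^ 2 * u + v) ≤ 2 * μ ^ n / v := by
            apply div_le_div_of_nonneg_left (by positivity) hv (by nlinarith)
        _ ≤ 2 / s * (μ ^ (n₀ - 1 - n : ℤ))⁻¹ := by
            have hle : μ ^ n * μ ^ (n₀ - 1 - n : ℤ) ≤ W := by rw [← hsplit]; exact h2
            rw [show (2:ℝ) / s * (μ ^ (n₀ - 1 - n : ℤ))⁻¹ = 2 / (s * μ ^ (n₀ - 1 - n : ℤ)) by
              field_simp]
            rw [show (2:ℝ) * μ ^ n / v = 2 / (v * (μ ^ n)⁻¹) by field_simp]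
            apply div_le_div_of_nonneg_left (by norm_num) (by positivity) ?_
            rw [← div_eq_mul_inv, le_div_iff₀ ht]
            nlinarith [mul_le_mul_of_nonneg_right hle hs.le]
  calc ∑' n : ℤ, ENNReal.ofReal (2 * μ ^ n / ((μ ^ n) ^ 2 * u + v))
      ≤ ∑' n : ℤ, (ENNReal.ofReal (2 / s) *
        ((if n₀ ≤ n then Q ^ (n - n₀).toNat else 0) +
          (if n < n₀ then Q ^ (n₀ - 1 - n).toNat else 0))) := ENNReal.tsum_le_tsum key
    _ = ENNReal.ofReal (2 / s) * ((1 - Q)⁻¹ + (1 - Q)⁻¹) := by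
        rw [ENNReal.tsum_mul_left, ENNReal.tsum_add, tsum_int_geo_ge, tsum_int_geo_lt]
    _ ≤ ENNReal.ofReal (4 * μ / ((μ - 1) * Real.sqrt (u * v))) := by
        have hinv : (0:ℝ) < 1 - μ⁻¹ := by
          have : μ⁻¹ < 1 := inv_lt_one_of_one_lt₀ hμ
          linarith
        have h1Q : (1 : ℝ≥0∞) - Q = ENNReal.ofReal (1 - μ⁻¹) := by
          rw [ENNReal.ofReal_sub _ (by positivity), ENNReal.ofReal_one]
        rw [h1Q, ← ENNReal.ofReal_inv_of_pos hinv, ← ENNReal.ofReal_add (by positivity) (by positivity),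
          ← ENNReal.ofReal_mul (by positivity)]
        apply ENNReal.ofReal_le_ofReal
        apply le_of_eq
        have hμm1 : μ - 1 ≠ 0 := by linarith
        have hinv' : (1:ℝ) - μ⁻¹ ≠ 0 := ne_of_gt hinv
        field_simp
        rw [hsuv, Real.sqrt_mul hu.le v]
        ring

lemma poisson_eq (μ : ℝ) (hμ : 1 < μ) (n : ℤ) (ζ : ℂ) (hζ : ‖ζ‖ = 1) :
    (1 - ((μ ^ n - 1) / (μ ^ n + 1)) ^ 2) / ‖ζ - (((μ ^ n - 1) / (μ ^ n + 1) : ℝ) : ℂ)‖ ^ 2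
      = 2 * μ ^ n / ((μ ^ n) ^ 2 * (1 - ζ.re) + (1 + ζ.re)) := by
  have hμ0 : (0:ℝ) < μ := by linarith
  set t : ℝ := μ ^ n with htdef
  have ht : 0 < t := zpow_pos hμ0 n
  have ht1 : t + 1 ≠ 0 := by positivity
  set x : ℝ := ζ.re
  set y : ℝ := ζ.im
  have hxy : x ^ 2 + y ^ 2 = 1 := by
    have h := Complex.sq_norm ζ
    rw [hζ] at h
    simpa [Complex.normSq_apply, sq] using h.symm
  set r : ℝ := (t - 1) / (t + 1) with hrdef
  have hnorm : ‖ζ - (r : ℂ)‖ ^ 2 = (x - r) ^ 2 + y ^ 2 := by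
    rw [Complex.sq_norm, Complex.normSq_apply]
    simp [Complex.sub_re, Complex.sub_im, Complex.ofReal_re, Complex.ofReal_im]
    ring
  have hx1 : x ^ 2 ≤ 1 := by nlinarith [sq_nonneg y]
  have hr2 : r ^ 2 < 1 := by
    rw [hrdef, div_pow, div_lt_one (by positivity)]
    nlinarith
  have hB : 0 < (x - r) ^ 2 + y ^ 2 := by
    nlinarith [sq_nonneg (1 - x * r), sq_nonneg (x - r), sq_nonneg (x * r)]
  have hD : 0 < t ^ 2 * (1 - x) + (1 + x) := by
    rcases le_or_gt x 0 with hx | hx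
    · nlinarith [mul_pos ht ht]
    · nlinarith [mul_pos ht ht, sq_nonneg t]
  rw [hnorm, div_eq_div_iff hB.ne' hD.ne']
  rw [hrdef]
  field_simp
  ring_nf
  linear_combination (-(2 * t + 4 * t ^ 2 + 2 * t ^ 3)) * hxy

lemma circle_bound (μ : ℝ) (hμ : 1 < μ)
    (r : ℤ → ℝ) (hr : ∀ n : ℤ, r n = (μ ^ n - 1) / (μ ^ n + 1))
    (ζ : ℂ) (hζ : ‖ζ‖ = 1) :
    ∑' n : ℤ, ENNReal.ofReal ((1 - r n ^ 2) / ‖ζ - (r n : ℂ)‖ ^ 2) ≤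
      ENNReal.ofReal (8 * μ / (μ - 1)) / ENNReal.ofReal (‖ζ - 1‖ * ‖ζ + 1‖) := by
  set x : ℝ := ζ.re
  set y : ℝ := ζ.im
  have hxy : x ^ 2 + y ^ 2 = 1 := by
    have h := Complex.sq_norm ζ
    rw [hζ] at h
    simpa [Complex.normSq_apply, sq] using h.symm
  set u : ℝ := 1 - x with hudef
  set v : ℝ := 1 + x with hvdef
  have hx1 : x ^ 2 ≤ 1 := by nlinarith [sq_nonneg y]
  have hu0 : 0 ≤ u := by nlinarith
  have hv0 : 0 ≤ v := by nlinarith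
  have hC : (0:ℝ) < 8 * μ / (μ - 1) := by
    apply div_pos (by linarith) (by linarith)
  have ha2 : ‖ζ - 1‖ ^ 2 = 2 * u := by
    rw [Complex.sq_norm, Complex.normSq_apply]
    simp only [Complex.sub_re, Complex.sub_im, Complex.one_re, Complex.one_im]
    linear_combination hxy
  have hb2 : ‖ζ + 1‖ ^ 2 = 2 * v := by
    rw [Complex.sq_norm, Complex.normSq_apply]
    simp only [Complex.add_re, Complex.add_im, Complex.one_re, Complex.one_im]
    linear_combination hxy
  have hteq : ∀ n : ℤ, ENNReal.ofReal ((1 - r n ^ 2) / ‖ζ - (r n : ℂ)‖ ^ 2)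
      = ENNReal.ofReal (2 * μ ^ n / ((μ ^ n) ^ 2 * u + v)) := by
    intro n
    rw [hr n]
    exact congrArg _ (poisson_eq μ hμ n ζ hζ)
  rw [tsum_congr hteq]
  rcases eq_or_lt_of_le hu0 with hu | hu
  · have : ‖ζ - 1‖ = 0 := by
      have : ‖ζ - 1‖ ^ 2 = 0 := by rw [ha2, ← hu]; ring
      exact pow_eq_zero_iff (by norm_num) |>.mp this
    rw [this, zero_mul, ENNReal.ofReal_zero, ENNReal.div_zero (by simp [hC.le]; positivity)]
    exact le_top
  rcases eq_or_lt_of_le hv0 with hv | hv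
  · have : ‖ζ + 1‖ = 0 := by
      have : ‖ζ + 1‖ ^ 2 = 0 := by rw [hb2, ← hv]; ring
      exact pow_eq_zero_iff (by norm_num) |>.mp this
    rw [this, mul_zero, ENNReal.ofReal_zero, ENNReal.div_zero (by simp [hC.le]; positivity)]
    exact le_top
  · -- u, v > 0
    refine (tsum_bound μ hμ u v hu hv).trans ?_
    have hab : ‖ζ - 1‖ * ‖ζ + 1‖ = 2 * Real.sqrt (u * v) := by
      have h1 : ‖ζ - 1‖ = Real.sqrt (2 * u) := by
        rw [← ha2, Real.sqrt_sq (norm_nonneg _)]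
      have h2 : ‖ζ + 1‖ = Real.sqrt (2 * v) := by
        rw [← hb2, Real.sqrt_sq (norm_nonneg _)]
      rw [h1, h2, ← Real.sqrt_mul (by positivity),
        show (2*u)*(2*v) = 4 * (u*v) by ring, Real.sqrt_mul (by norm_num),
        show Real.sqrt 4 = 2 by
          rw [show (4:ℝ) = 2 ^ 2 by norm_num, Real.sqrt_sq (by norm_num)]]
    rw [hab, ← ENNReal.ofReal_div_of_pos (by positivity)]
    apply ENNReal.ofReal_le_ofReal
    apply le_of_eq
    have hsp : (0:ℝ) < Real.sqrt (u * v) := Real.sqrt_pos.2 (by positivity)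
    have : μ - 1 ≠ 0 := by linarith
    field_simp
    ring
lemma circleMeasure_ae_norm_one : ∀ᵐ ζ ∂circleMeasure, ‖ζ‖ = 1 := by
  have hmeasexp : Measurable fun θ : ℝ => Complex.exp (θ * Complex.I) :=
    (Complex.continuous_exp.comp (Complex.continuous_ofReal.mul continuous_const)).measurable
  have hset : MeasurableSet {ζ : ℂ | ¬ ‖ζ‖ = 1} := by
    have : IsClosed {ζ : ℂ | ‖ζ‖ = 1} := isClosed_eq continuous_norm continuous_const
    exact this.measurableSet.compl
  rw [ae_iff]
  rw [circleMeasure, Measure.map_apply hmeasexp hset]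
  have : (fun θ : ℝ => Complex.exp (θ * Complex.I)) ⁻¹' {ζ : ℂ | ¬ ‖ζ‖ = 1} = ∅ := by
    ext θ
    simp [Complex.norm_exp_ofReal_mul_I]
  rw [this]
  simp

/-- Let `μ > 1` and `r_n = (μⁿ-1)/(μⁿ+1)` for `n ∈ ℤ`. If
`w : ∂𝔻 → [0,∞]` is measurable with `∫ w(ζ)/(|ζ-1||ζ+1|) dm < ∞`, then
`∑_{n∈ℤ} ∫ w·P_{r_n} dm < ∞`, where `P_ρ(ζ) = (1-ρ²)/|ζ-ρ|²`.
(For `w = |f|²` this says `∑_{n∈ℤ} ‖f∘φ_μ^[n]‖² < ∞` when `f ∈ √((z-1)(z+1))H²`.) -/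
theorem summable_poisson_integrals_over_orbit
    (μ : ℝ) (hμ : 1 < μ)
    (r : ℤ → ℝ) (hr : ∀ n : ℤ, r n = (μ ^ n - 1) / (μ ^ n + 1))
    (w : ℂ → ℝ≥0∞) (hw : Measurable w)
    (hint : (∫⁻ ζ, w ζ / ENNReal.ofReal (‖ζ - 1‖ * ‖ζ + 1‖) ∂circleMeasure) ≠ ⊤) :
    (∑' n : ℤ, ∫⁻ ζ, w ζ *
        ENNReal.ofReal ((1 - r n ^ 2) / ‖ζ - (r n : ℂ)‖ ^ 2) ∂circleMeasure) < ⊤ := by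
  set C : ℝ≥0∞ := ENNReal.ofReal (8 * μ / (μ - 1)) with hCdef
  have hmeasP : ∀ n : ℤ, Measurable fun ζ : ℂ =>
      ENNReal.ofReal ((1 - r n ^ 2) / ‖ζ - (r n : ℂ)‖ ^ 2) := by
    intro n
    apply Measurable.ennreal_ofReal
    exact measurable_const.div (((continuous_id.sub continuous_const).norm.pow 2).measurable)
  rw [← lintegral_tsum (fun n => (show AEMeasurable (fun ζ => w ζ * ENNReal.ofReal ((1 - r n ^ 2) / ‖ζ - (r n : ℂ)‖ ^ 2)) circleMeasure from (hw.mul (hmeasP n)).aemeasurable))]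
  have step1 : (∫⁻ ζ, ∑' n : ℤ, w ζ *
      ENNReal.ofReal ((1 - r n ^ 2) / ‖ζ - (r n : ℂ)‖ ^ 2) ∂circleMeasure)
      ≤ ∫⁻ ζ, C * (w ζ / ENNReal.ofReal (‖ζ - 1‖ * ‖ζ + 1‖)) ∂circleMeasure := by
    apply lintegral_mono_ae
    filter_upwards [circleMeasure_ae_norm_one] with ζ hζ
    rw [ENNReal.tsum_mul_left]
    calc w ζ * ∑' n : ℤ, ENNReal.ofReal ((1 - r n ^ 2) / ‖ζ - (r n : ℂ)‖ ^ 2)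
        ≤ w ζ * (C / ENNReal.ofReal (‖ζ - 1‖ * ‖ζ + 1‖)) :=
          mul_le_mul_right (circle_bound μ hμ r hr ζ hζ) _
      _ = C * (w ζ / ENNReal.ofReal (‖ζ - 1‖ * ‖ζ + 1‖)) := by
          rw [div_eq_mul_inv, div_eq_mul_inv]; ring
  refine lt_of_le_of_lt step1 ?_
  rw [lintegral_const_mul' C _ ENNReal.ofReal_ne_top]
  exact ENNReal.mul_lt_top ENNReal.ofReal_lt_top hint.lt_top
end
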